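/- In a Markov category, conditional independence satisfies the weak union property when conditionals exist: if a state f : I → X⊗Y⊗W⊗Z displays X ⊥ (Y⊗W) | Z and the category has conditionals, then f displays X ⊥ Y | (W⊗Z). -/

import Mathlib

open CategoryTheory MonoidalCategory

/-- A Markov category: a symmetric monoidal category where every object carries a
commutative comonoid structure (copy/del), compatible with the monoidal structure,
with the discard map `del` natural. -/
class MarkovCategory' (C : Type*) [Category C] [MonoidalCategory C] [SymmetricCategory C] where
  copy : ∀ X : C, X ⟶ X ⊗ X
  del : ∀ X : C, X ⟶ 𝟙_ C
  copy_del_left : ∀ X : C, copy X ≫ (del X ▷ X) ≫ (λ_ X).hom = 𝟙 X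
  copy_del_right : ∀ X : C, copy X ≫ (X ◁ del X) ≫ (ρ_ X).hom = 𝟙 X
  copy_assoc : ∀ X : C, copy X ≫ (copy X ▷ X) ≫ (α_ X X X).hom = copy X ≫ (X ◁ copy X)
  copy_comm : ∀ X : C, copy X ≫ (β_ X X).hom = copy X
  copy_tensor : ∀ X Y : C, copy (X ⊗ Y) =
    (copy X ⊗ₘ copy Y) ≫ (α_ X X (Y ⊗ Y)).hom ≫ (X ◁ (α_ X Y Y).inv) ≫
      (X ◁ ((β_ X Y).hom ▷ Y)) ≫ (X ◁ (α_ Y X Y).hom) ≫ (α_ X Y (X ⊗ Y)).inv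
  del_tensor : ∀ X Y : C, del (X ⊗ Y) = (del X ⊗ₘ del Y) ≫ (λ_ (𝟙_ C)).hom
  copy_unit : copy (𝟙_ C) = (λ_ (𝟙_ C)).inv
  del_unit : del (𝟙_ C) = 𝟙 (𝟙_ C)
  del_natural : ∀ {X Y : C} (f : X ⟶ Y), f ≫ del Y = del X

open MarkovCategory'

variable {C : Type*} [Category C] [MonoidalCategory C] [SymmetricCategory C] [MarkovCategory' C]

/-- A state `f : I ⟶ X ⊗ (Y ⊗ Z)` displays the conditional independence `X ⊥ Y | Z` if
it factors as a state on `Z`, copying of `Z`, and morphisms `g : Z ⟶ X`, `h : Z ⟶ Y`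
applied to two of the copies (the third copy being the `Z`-output). -/
def CIState {X Y Z : C} (f : 𝟙_ C ⟶ X ⊗ (Y ⊗ Z)) : Prop :=
  ∃ (p : 𝟙_ C ⟶ Z) (g : Z ⟶ X) (h : Z ⟶ Y),
    f = p ≫ copy Z ≫ (Z ◁ copy Z) ≫ (g ⊗ₘ (h ▷ Z))

/-- A Markov category has conditionals if every `f : A ⟶ X ⊗ Y` factors through its
`X`-marginal followed by a conditional `c : X ⊗ A ⟶ Y`. -/
def HasConditionals (C : Type*) [Category C] [MonoidalCategory C] [SymmetricCategory C]
    [MarkovCategory' C] : Prop :=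
  ∀ (A X Y : C) (f : A ⟶ X ⊗ Y), ∃ c : X ⊗ A ⟶ Y,
    f = copy A ≫ ((f ≫ (X ◁ del Y) ≫ (ρ_ X).hom) ▷ A) ≫ (copy X ▷ A) ≫
      (α_ X X A).hom ≫ (X ◁ c)


set_option linter.unusedSectionVars false

/-- Discard the first tensor factor. -/
def wuDd (W A : C) : W ⊗ A ⟶ A := (del W ▷ A) ≫ (λ_ A).hom

lemma wuDd_nat (W : C) {A B : C} (v : A ⟶ B) : (W ◁ v) ≫ wuDd W B = wuDd W A ≫ v := by
  rw [wuDd, wuDd, whisker_exchange_assoc]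
  simp

lemma wuDd_assoc (W A B : C) : (α_ W A B).hom ≫ wuDd W (A ⊗ B) = wuDd W A ▷ B := by
  simp [wuDd]

lemma wu_copy_Dd (W : C) : copy W ≫ wuDd W W = 𝟙 W := by
  simpa [wuDd] using copy_del_left W

/-- Copying a tensor and discarding the first `W` factor. -/
lemma wuL5 (W Z : C) :
    copy (W ⊗ Z) ≫ (wuDd W Z ▷ (W ⊗ Z)) =
    (W ◁ copy Z) ≫ (α_ W Z Z).inv ≫ ((β_ W Z).hom ▷ Z) ≫ (α_ Z W Z).hom := by
  rw [copy_tensor]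
  have ea : (α_ W Z (W ⊗ Z)).inv ≫ (wuDd W Z ▷ (W ⊗ Z)) = wuDd W (Z ⊗ (W ⊗ Z)) := by
    rw [← wuDd_assoc, Iso.inv_hom_id_assoc]
  slice_lhs 6 7 => rw [ea]
  slice_lhs 5 6 => rw [wuDd_nat]
  slice_lhs 4 5 => rw [wuDd_nat]
  slice_lhs 3 4 => rw [wuDd_nat]
  slice_lhs 2 3 => rw [wuDd_assoc]
  have ef : (copy W ⊗ₘ copy Z) ≫ (wuDd W W ▷ (Z ⊗ Z)) = W ◁ copy Z := by
    rw [tensorHom_def', Category.assoc, ← comp_whiskerRight, wu_copy_Dd, id_whiskerRight,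
      Category.comp_id]
  slice_lhs 1 2 => rw [ef]
  simp

lemma wuL6 (W Z : C) (m : Z ⟶ W) :
    copy Z ≫ (m ▷ Z) ≫ (W ◁ copy Z) ≫ (α_ W Z Z).inv ≫ ((β_ W Z).hom ▷ Z) ≫ (α_ Z W Z).hom
    = copy Z ≫ (Z ◁ (copy Z ≫ (m ▷ Z))) := by
  have e1 : (m ▷ Z) ≫ (W ◁ copy Z) = (Z ◁ copy Z) ≫ (m ▷ (Z ⊗ Z)) :=
    (whisker_exchange m (copy Z)).symm
  slice_lhs 2 3 => rw [e1]
  have e2 : (m ▷ (Z ⊗ Z)) ≫ (α_ W Z Z).inv = (α_ Z Z Z).inv ≫ ((m ▷ Z) ▷ Z) := by simp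
  slice_lhs 3 4 => rw [e2]
  have e3 : ((m ▷ Z) ▷ Z) ≫ ((β_ W Z).hom ▷ Z) = ((β_ Z Z).hom ▷ Z) ≫ ((Z ◁ m) ▷ Z) := by
    rw [← comp_whiskerRight, ← comp_whiskerRight, BraidedCategory.braiding_naturality_left]
  slice_lhs 4 5 => rw [e3]
  have e4a : copy Z ≫ (Z ◁ copy Z) ≫ (α_ Z Z Z).inv = copy Z ≫ (copy Z ▷ Z) := by
    rw [← cancel_mono (α_ Z Z Z).hom]
    simp only [Category.assoc, Iso.inv_hom_id, Category.comp_id, copy_assoc]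
  have e4 : copy Z ≫ (Z ◁ copy Z) ≫ (α_ Z Z Z).inv ≫ ((β_ Z Z).hom ▷ Z)
      = copy Z ≫ (Z ◁ copy Z) ≫ (α_ Z Z Z).inv := by
    calc copy Z ≫ (Z ◁ copy Z) ≫ (α_ Z Z Z).inv ≫ ((β_ Z Z).hom ▷ Z)
        = (copy Z ≫ (Z ◁ copy Z) ≫ (α_ Z Z Z).inv) ≫ ((β_ Z Z).hom ▷ Z) := by
          simp only [Category.assoc]
      _ = (copy Z ≫ (copy Z ▷ Z)) ≫ ((β_ Z Z).hom ▷ Z) := by rw [e4a]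
      _ = copy Z ≫ ((copy Z ≫ (β_ Z Z).hom) ▷ Z) := by simp
      _ = copy Z ≫ (copy Z ▷ Z) := by rw [copy_comm]
      _ = copy Z ≫ (Z ◁ copy Z) ≫ (α_ Z Z Z).inv := e4a.symm
  slice_lhs 1 4 => rw [e4]
  have e5 : ((Z ◁ m) ▷ Z) ≫ (α_ Z W Z).hom = (α_ Z Z Z).hom ≫ (Z ◁ (m ▷ Z)) := by simp
  slice_lhs 4 5 => rw [e5]
  simp

/-- The purely structural heart. -/
lemma wuTheta (W Z : C) :
    (((β_ W W).hom ▷ Z) ▷ Z) ≫ ((α_ W W Z).hom ▷ Z) ≫ ((β_ W (W ⊗ Z)).hom ▷ Z) ≫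
      (α_ (W ⊗ Z) W Z).hom
    = (α_ (W ⊗ W) Z Z).hom ≫ (α_ W W (Z ⊗ Z)).hom ≫ (W ◁ (α_ W Z Z).inv) ≫
      (W ◁ ((β_ W Z).hom ▷ Z)) ≫ (W ◁ (α_ Z W Z).hom) ≫ (α_ W Z (W ⊗ Z)).inv := by
  simp
  rw [← comp_whiskerRight_assoc, ← comp_whiskerRight, SymmetricCategory.symmetry]
  simp

lemma wuThetaC {W Y Z : C} (c : W ⊗ Z ⟶ Y) :
    (((β_ W W).hom ▷ Z) ▷ Z) ≫ ((α_ W W Z).hom ▷ Z) ≫ ((W ◁ c) ▷ Z) ≫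
      ((β_ W Y).hom ▷ Z) ≫ (α_ Y W Z).hom
    = (α_ (W ⊗ W) Z Z).hom ≫ (α_ W W (Z ⊗ Z)).hom ≫ (W ◁ (α_ W Z Z).inv) ≫
      (W ◁ ((β_ W Z).hom ▷ Z)) ≫ (W ◁ (α_ Z W Z).hom) ≫ (α_ W Z (W ⊗ Z)).inv ≫
      (c ▷ (W ⊗ Z)) := by
  have e1 : ((W ◁ c) ▷ Z) ≫ ((β_ W Y).hom ▷ Z)
      = ((β_ W (W ⊗ Z)).hom ▷ Z) ≫ ((c ▷ W) ▷ Z) := by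
    rw [← comp_whiskerRight, ← comp_whiskerRight, BraidedCategory.braiding_naturality_right]
  slice_lhs 3 4 => rw [e1]
  have e2 : ((c ▷ W) ▷ Z) ≫ (α_ Y W Z).hom = (α_ (W ⊗ Z) W Z).hom ≫ (c ▷ (W ⊗ Z)) := by
    simp
  slice_lhs 4 5 => rw [e2]
  slice_lhs 1 4 => rw [wuTheta]
  simp

/-- The key identity (weak union heart). -/
lemma wuStar {W Y Z : C} (h : Z ⟶ Y ⊗ W) (m : Z ⟶ W) (c : W ⊗ Z ⟶ Y)
    (hh : h = copy Z ≫ (m ▷ Z) ≫ (copy W ▷ Z) ≫ (α_ W W Z).hom ≫ (W ◁ c) ≫ (β_ W Y).hom) :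
    copy Z ≫ (h ▷ Z) ≫ (α_ Y W Z).hom
    = copy Z ≫ (m ▷ Z) ≫ copy (W ⊗ Z) ≫ (c ▷ (W ⊗ Z)) := by
  -- rewrite both sides into `copy Z ≫ (copy Z ▷ Z) ≫ (((m ≫ copy W) ▷ Z) ▷ Z) ≫ Θ`
  have lhs_eq : copy Z ≫ (h ▷ Z) ≫ (α_ Y W Z).hom
      = copy Z ≫ (copy Z ▷ Z) ≫ (((m ≫ copy W) ▷ Z) ▷ Z) ≫ (((β_ W W).hom ▷ Z) ▷ Z) ≫
        ((α_ W W Z).hom ▷ Z) ≫ ((W ◁ c) ▷ Z) ≫ ((β_ W Y).hom ▷ Z) ≫ (α_ Y W Z).hom := by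
    rw [hh]
    conv_lhs => rw [← copy_comm W]
    simp only [comp_whiskerRight, Category.assoc]
  have rhs_eq : copy Z ≫ (m ▷ Z) ≫ copy (W ⊗ Z) ≫ (c ▷ (W ⊗ Z))
      = copy Z ≫ (copy Z ▷ Z) ≫ (((m ≫ copy W) ▷ Z) ▷ Z) ≫ (α_ (W ⊗ W) Z Z).hom ≫
        (α_ W W (Z ⊗ Z)).hom ≫ (W ◁ (α_ W Z Z).inv) ≫ (W ◁ ((β_ W Z).hom ▷ Z)) ≫
        (W ◁ (α_ Z W Z).hom) ≫ (α_ W Z (W ⊗ Z)).inv ≫ (c ▷ (W ⊗ Z)) := by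
    rw [copy_tensor]
    have t1 : (m ▷ Z) ≫ (copy W ⊗ₘ copy Z)
        = (Z ◁ copy Z) ≫ ((m ≫ copy W) ▷ (Z ⊗ Z)) := by
      rw [tensorHom_def', ← whisker_exchange_assoc, comp_whiskerRight]
    slice_lhs 2 3 => rw [t1]
    have t2 : copy Z ≫ (Z ◁ copy Z) = copy Z ≫ (copy Z ▷ Z) ≫ (α_ Z Z Z).hom := copy_assoc Z |>.symm
    slice_lhs 1 2 => rw [t2]
    have t3 : (α_ Z Z Z).hom ≫ ((m ≫ copy W) ▷ (Z ⊗ Z))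
        = (((m ≫ copy W) ▷ Z) ▷ Z) ≫ (α_ (W ⊗ W) Z Z).hom := by simp
    slice_lhs 3 4 => rw [t3]
    simp only [Category.assoc]
  rw [lhs_eq, rhs_eq]
  congr 3
  simpa only [Category.assoc] using wuThetaC (W := W) (Y := Y) (Z := Z) c

/-- Weak union: in a Markov category with conditionals, if a state
`f : I ⟶ X ⊗ ((Y ⊗ W) ⊗ Z)` displays `X ⊥ (Y ⊗ W) | Z`, then (after reassociating the
tensor factors) it displays `X ⊥ Y | (W ⊗ Z)`. -/
theorem ci_weak_union (hcond : HasConditionals C)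
    {X Y W Z : C} (f : 𝟙_ C ⟶ X ⊗ ((Y ⊗ W) ⊗ Z))
    (hf : CIState f) :
    CIState (f ≫ (X ◁ (α_ Y W Z).hom)) := by
  obtain ⟨p, g, h, hfac⟩ := hf
  obtain ⟨c, hc⟩ := hcond Z W Y (h ≫ (β_ Y W).hom)
  set m : Z ⟶ W := (h ≫ (β_ Y W).hom) ≫ (W ◁ del Y) ≫ (ρ_ W).hom with hm
  have hh : h = copy Z ≫ (m ▷ Z) ≫ (copy W ▷ Z) ≫ (α_ W W Z).hom ≫ (W ◁ c) ≫ (β_ W Y).hom := by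
    calc h = (h ≫ (β_ Y W).hom) ≫ (β_ W Y).hom := by
            rw [Category.assoc, SymmetricCategory.symmetry, Category.comp_id]
      _ = _ := by rw [hc]; simp only [Category.assoc]
  have key := wuStar h m c hh
  refine ⟨p ≫ copy Z ≫ (m ▷ Z), (del W ▷ Z) ≫ (λ_ Z).hom ≫ g, c, ?_⟩
  have lhsEq : p ≫ copy Z ≫ (Z ◁ copy Z) ≫ ((g ⊗ₘ (h ▷ Z)) ≫ (X ◁ (α_ Y W Z).hom))
      = p ≫ copy Z ≫ (g ▷ Z) ≫ (X ◁ (copy Z ≫ (h ▷ Z) ≫ (α_ Y W Z).hom)) := by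
    rw [MonoidalCategory.tensorHom_def]
    simp only [Category.assoc]
    rw [whisker_exchange_assoc]
    simp only [← MonoidalCategory.whiskerLeft_comp, Category.assoc]
  have rhsEq : p ≫ copy Z ≫ (m ▷ Z) ≫ copy (W ⊗ Z) ≫ ((W ⊗ Z) ◁ copy (W ⊗ Z)) ≫
        (((del W ▷ Z) ≫ (λ_ Z).hom ≫ g) ⊗ₘ (c ▷ (W ⊗ Z)))
      = p ≫ copy Z ≫ (g ▷ Z) ≫
          (X ◁ (copy Z ≫ (m ▷ Z) ≫ copy (W ⊗ Z) ≫ (c ▷ (W ⊗ Z)))) := by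
    rw [MonoidalCategory.tensorHom_def]
    rw [whisker_exchange_assoc]
    have g'split : ((del W ▷ Z) ≫ (λ_ Z).hom ≫ g) ▷ (W ⊗ Z)
        = (wuDd W Z ▷ (W ⊗ Z)) ≫ (g ▷ (W ⊗ Z)) := by
      simp [wuDd]
    rw [g'split]
    have l5 := wuL5 (C := C) W Z
    slice_lhs 4 5 => rw [l5]
    have l6chain : copy Z ≫ (m ▷ Z) ≫ (W ◁ copy Z) ≫ (α_ W Z Z).inv ≫
          ((β_ W Z).hom ▷ Z) ≫ (α_ Z W Z).hom
        = copy Z ≫ (Z ◁ (copy Z ≫ (m ▷ Z))) := wuL6 W Z m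
    slice_lhs 2 7 => rw [l6chain]
    simp only [Category.assoc]
    rw [whisker_exchange_assoc]
    simp only [← MonoidalCategory.whiskerLeft_comp, Category.assoc]
  rw [hfac]
  simp only [Category.assoc]
  rw [lhsEq, key, ← rhsEq]
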